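/- Let h be a Brouwer homeomorphism of ℝ² and L a Brouwer line for h. Then for all integers m < n, hⁿ(L) ⊂ D(hᵐ(L)); in particular the images hⁿ(L), n ∈ ℤ, are pairwise disjoint. -/

import Mathlib

abbrev Plane := EuclideanSpace ℝ (Fin 2)

def IsotopicToId {X : Type*} [TopologicalSpace X] (f : X → X) : Prop :=
  ∃ F : ℝ → X → X, Continuous (fun p : ℝ × X => F p.1 p.2) ∧
    (∀ t : ℝ, ∃ g : Homeomorph X X, ⇑g = F t) ∧ F 0 = id ∧ F 1 = f

/-- L is a properly embedded topological line in the plane. -/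
def IsProperLine (L : Set Plane) : Prop :=
  ∃ γ : ℝ → Plane, Continuous γ ∧ Function.Injective γ ∧
    Filter.Tendsto γ (Filter.cocompact ℝ) (Filter.cocompact Plane) ∧ Set.range γ = L

/-- L is a Brouwer line for h: a properly embedded line, free under h, which
separates h(L) from h⁻¹(L) (they lie in different components of the complement). -/
def IsBrouwerLine (h : Homeomorph Plane Plane) (L : Set Plane) : Prop :=
  IsProperLine L ∧ L ∩ ⇑h '' L = ∅ ∧
  ∀ x ∈ ⇑h '' L, ∀ y ∈ ⇑h.symm '' L,
    connectedComponentIn Lᶜ x ≠ connectedComponentIn Lᶜ y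

/-- For m < n one has hⁿ(L) ⊂ hᵐ(D(L)) = D(hᵐ(L)); in particular the iterates of a
Brouwer line are pairwise disjoint. -/
theorem stmt10 (h : Homeomorph Plane Plane)
    (hfree : ∀ x : Plane, h x ≠ x) (hor : IsotopicToId ⇑h)
    (L : Set Plane) (hL : IsBrouwerLine h L)
    (D : Set Plane) (p : Plane) (hp : p ∈ ⇑h '' L)
    (hDdef : D = connectedComponentIn Lᶜ p) :
    (∀ m n : ℤ, m < n → ⇑(h.toEquiv ^ n) '' L ⊆ ⇑(h.toEquiv ^ m) '' D) ∧
    (∀ m n : ℤ, m ≠ n → (⇑(h.toEquiv ^ m) '' L) ∩ (⇑(h.toEquiv ^ n) '' L) = ∅) := by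
  obtain ⟨⟨γ, hγc, hγi, hγt, hγr⟩, hfreeL, hsep⟩ := hL
  have hLclosed : IsClosed L := by
    rw [← hγr]
    exact ((isProperMap_iff_tendsto_cocompact.2 ⟨hγc, hγt⟩).isClosedMap).isClosed_range
  have hLne : L.Nonempty := by
    rw [← hγr]; exact ⟨γ 0, 0, rfl⟩
  have hLco : IsOpen Lᶜ := hLclosed.isOpen_compl
  have hfreeL' : ∀ x : Plane, x ∈ ⇑h '' L → x ∉ L := by
    intro x hx hxL
    exact Set.eq_empty_iff_forall_notMem.mp hfreeL x ⟨hxL, hx⟩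
  have hpc : p ∈ Lᶜ := hfreeL' p hp
  have hDopen : IsOpen D := hDdef ▸ hLco.connectedComponentIn
  have hDsub : D ⊆ Lᶜ := hDdef ▸ connectedComponentIn_subset _ _
  have hpD : p ∈ D := hDdef ▸ mem_connectedComponentIn hpc
  have hDconn : IsPreconnected D := hDdef ▸ isPreconnected_connectedComponentIn
  have comp_eq : ∀ x ∈ D, connectedComponentIn Lᶜ x = D := by
    intro x hx
    rw [hDdef] at hx ⊢
    exact (connectedComponentIn_eq hx).symm
  have key_sub : ∀ S : Set Plane, IsPreconnected S → S ⊆ Lᶜ → (∃ x ∈ S, x ∈ D) → S ⊆ D := by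
    rintro S hS hSL ⟨x, hxS, hxD⟩
    rw [← comp_eq x hxD]
    exact hS.subset_connectedComponentIn hxS hSL
  have hLconn : IsPreconnected L := hγr ▸ (isPreconnected_range hγc)
  have hhL_sub : ⇑h '' L ⊆ Lᶜ := fun x hx => hfreeL' x hx
  have hhL_D : ⇑h '' L ⊆ D :=
    key_sub _ (hLconn.image _ h.continuous.continuousOn) hhL_sub ⟨p, hp, hpD⟩
  -- h(D) misses L, via the separation hypothesis
  have hhD_L : ∀ x ∈ D, h x ∉ L := by
    intro x hxD hhxL
    have hx' : x ∈ ⇑h.symm '' L := ⟨h x, hhxL, h.symm_apply_apply x⟩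
    refine hsep p hp x hx' ?_
    rw [comp_eq x hxD, hDdef]
  -- frontier of D lies in L
  have hfront : frontier D ⊆ L := by
    intro x hx
    by_contra hxL
    have hxcl : x ∈ closure D := hx.1
    have hopen : IsOpen (connectedComponentIn Lᶜ x) := hLco.connectedComponentIn
    have hxmem : x ∈ connectedComponentIn Lᶜ x := mem_connectedComponentIn hxL
    obtain ⟨y, hy1, hy2⟩ := mem_closure_iff.mp hxcl _ hopen hxmem
    have hxD : x ∈ D := by
      rw [← comp_eq y hy2, ← connectedComponentIn_eq hy1]
      exact hxmem
    exact hx.2 (by rwa [hDopen.interior_eq])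
  have hfne : (frontier D).Nonempty := by
    by_contra hne
    rw [Set.not_nonempty_iff_eq_empty] at hne
    have hclop : IsClopen D := isClopen_iff_frontier_eq_empty.mpr hne
    rcases isClopen_iff.mp hclop with h1 | h1
    · rw [h1] at hpD; exact hpD
    · obtain ⟨q, hq⟩ := hLne
      exact hDsub (h1 ▸ Set.mem_univ q) hq
  obtain ⟨q, hq⟩ := hfne
  have hclosure_sub : closure D ⊆ D ∪ L := by
    intro x hx
    by_cases h1 : x ∈ D
    · exact Or.inl h1
    · exact Or.inr (hfront ⟨hx, by rwa [hDopen.interior_eq]⟩)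
  have himg_conn : IsPreconnected (⇑h '' closure D) :=
    (hDconn.closure).image _ h.continuous.continuousOn
  have himg_sub : ⇑h '' closure D ⊆ Lᶜ := by
    rintro _ ⟨x, hx, rfl⟩ hmem
    rcases hclosure_sub hx with h1 | h1
    · exact hhD_L x h1 hmem
    · exact hfreeL' (h x) (Set.mem_image_of_mem _ h1) hmem
  have hqD : h q ∈ D := hhL_D (Set.mem_image_of_mem _ (hfront hq))
  have hclD : ⇑h '' closure D ⊆ D :=
    key_sub _ himg_conn himg_sub ⟨h q, Set.mem_image_of_mem _ (hq.1), hqD⟩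
  have hhD : ⇑h '' D ⊆ D := (Set.image_mono subset_closure).trans hclD
  -- iterates: h^(k+1)(L) ⊆ D for all k ∈ ℕ
  have hcoe : ⇑h.toEquiv = ⇑h := rfl
  have hiter : ∀ k : ℕ, ⇑(h.toEquiv ^ (k + 1)) '' L ⊆ D := by
    intro k
    induction k with
    | zero => simpa [hcoe] using hhL_D
    | succ n ih =>
      have e : h.toEquiv ^ (n + 1 + 1) = h.toEquiv * h.toEquiv ^ (n + 1) := by
        rw [pow_succ']
      rw [e]
      rintro _ ⟨y, hy, rfl⟩
      have h1 : (h.toEquiv ^ (n + 1)) y ∈ D := ih ⟨y, hy, rfl⟩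
      have h2 : (h.toEquiv * h.toEquiv ^ (n + 1)) y = h ((h.toEquiv ^ (n + 1)) y) := rfl
      rw [h2]
      exact hhD (Set.mem_image_of_mem _ h1)
  have part1 : ∀ m n : ℤ, m < n → ⇑(h.toEquiv ^ n) '' L ⊆ ⇑(h.toEquiv ^ m) '' D := by
    intro m n hmn
    obtain ⟨k, hk⟩ : ∃ k : ℕ, n = m + ((k : ℤ) + 1) := ⟨(n - m - 1).toNat, by omega⟩
    have e : h.toEquiv ^ n = h.toEquiv ^ m * h.toEquiv ^ (k + 1) := by
      rw [hk, zpow_add]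
      congr 1
    rw [e]
    rintro _ ⟨y, hy, rfl⟩
    have h1 : (h.toEquiv ^ (k + 1)) y ∈ D := hiter k ⟨y, hy, rfl⟩
    exact ⟨(h.toEquiv ^ (k + 1)) y, h1, rfl⟩
  refine ⟨part1, ?_⟩
  have disj : ∀ a b : ℤ, a < b →
      (⇑(h.toEquiv ^ a) '' L) ∩ (⇑(h.toEquiv ^ b) '' L) = ∅ := by
    intro a b hab
    rw [Set.eq_empty_iff_forall_notMem]
    rintro x ⟨hx1, hx2⟩
    obtain ⟨y, hyD, hyx⟩ := part1 a b hab hx2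
    obtain ⟨z, hzL, hzx⟩ := hx1
    have hyz : y = z := (h.toEquiv ^ a).injective (hyx.trans hzx.symm)
    exact hDsub hyD (by rwa [hyz])
  intro m n hmn
  rcases lt_or_gt_of_ne hmn with h1 | h1
  · exact disj m n h1
  · rw [Set.inter_comm]; exact disj n m h1
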